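/- Let m = 2g + 2 ≥ 4 be even. Then (2πi)^{−3g} · ∏_{k ∈ I} Γ(k/m)²·Γ([−2k]/m) = i^{−3g}·4·m^{−2}, where I = {1, …, m−1} \ {m/2} and, for k ∈ I, [−2k] ∈ {1, …, m−1} denotes the representative of −2k modulo m (which is nonzero since k ≠ m/2). -/

import Mathlib

/-- For `x : ℤ` not divisible by `m`, `repZ m x ∈ {1, …, m-1}` is the representative of
`x` modulo `m` (in general it is the representative in `{0, …, m-1}`). -/
def repZ (m : ℕ) (x : ℤ) : ℕ := (x % (m : ℤ)).toNat

open Finset Complex in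
lemma prod_one_sub_zeta (n : ℕ) (hn : 1 ≤ n) :
    ∏ k ∈ Finset.Icc 1 (n - 1), (1 - Complex.exp (2 * Real.pi * Complex.I / n) ^ k) = n := by
  set ζ : ℂ := Complex.exp (2 * Real.pi * Complex.I / n) with hζdef
  have hζ : IsPrimitiveRoot ζ n := Complex.isPrimitiveRoot_exp n (by omega)
  -- nthRootsFinset as image
  have himg : Polynomial.nthRootsFinset n (1 : ℂ) = (Finset.range n).image (ζ ^ ·) := by
    symm
    apply Finset.eq_of_subset_of_card_le
    · intro x hx
      simp only [Finset.mem_image, Finset.mem_range] at hx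
      obtain ⟨k, hk, rfl⟩ := hx
      rw [Polynomial.mem_nthRootsFinset (by omega)]
      rw [← pow_mul, mul_comm, pow_mul, hζ.pow_eq_one, one_pow]
    · rw [hζ.card_nthRootsFinset, Finset.card_image_of_injOn hζ.injOn_pow]
      simp
  have key : ∀ x : ℂ, ∏ k ∈ Finset.range n, (x - ζ ^ k) = x ^ n - 1 := by
    intro x
    have := hζ.pow_sub_pow_eq_prod_sub_mul (x := x) (y := (1:ℂ)) (by omega)
    simp only [one_pow, mul_one] at this
    rw [this, himg, Finset.prod_image (fun a ha b hb h => hζ.injOn_pow (by simpa using ha) (by simpa using hb) h)]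
  -- split off k = 0
  have hIcc : Finset.Icc 1 (n - 1) = Finset.Ico 1 n := by
    ext k; simp [Finset.mem_Icc, Finset.mem_Ico]; omega
  have key2 : ∀ x : ℂ, (x - 1) * ∏ k ∈ Finset.Icc 1 (n - 1), (x - ζ ^ k) = x ^ n - 1 := by
    intro x
    have hsplit : ∏ k ∈ Finset.range n, (x - ζ ^ k)
        = (x - ζ ^ 0) * ∏ k ∈ Finset.Ico 1 n, (x - ζ ^ k) := by
      rw [Finset.range_eq_Ico]
      exact Finset.prod_eq_prod_Ico_succ_bot (by omega) (fun k => x - ζ ^ k)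
    rw [hIcc, ← key x, hsplit, pow_zero]
  -- compare with geometric sum off x = 1, extend by continuity
  have heq : (fun x : ℂ => ∏ k ∈ Finset.Icc 1 (n - 1), (x - ζ ^ k))
      = fun x : ℂ => ∑ i ∈ Finset.range n, x ^ i := by
    apply Continuous.ext_on (dense_compl_singleton (1 : ℂ))
    · exact continuous_finset_prod _ (fun k _ => by continuity)
    · exact continuous_finset_sum _ (fun i _ => by continuity)
    · intro x hx
      have hx1 : x - 1 ≠ 0 := sub_ne_zero.2 (by simpa using hx)
      have := key2 x
      rw [← mul_geom_sum x n] at this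
      exact mul_left_cancel₀ hx1 this
  have := congrFun heq 1
  simpa using this

lemma prod_sin_icc (n : ℕ) (hn : 1 ≤ n) :
    ∏ k ∈ Finset.Icc 1 (n - 1), Complex.sin ((Real.pi : ℂ) * k / n) = n / 2 ^ (n - 1) := by
  have hn0 : (n : ℂ) ≠ 0 := Nat.cast_ne_zero.2 (by omega)
  set ζ : ℂ := Complex.exp (2 * Real.pi * Complex.I / n) with hζdef
  set w : ℂ := Complex.exp (-((Real.pi : ℂ) * Complex.I / n)) with hwdef
  have hfac : ∀ k : ℕ, Complex.sin ((Real.pi : ℂ) * k / n)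
      = (1 - ζ ^ k) * w ^ k * (Complex.I / 2) := by
    intro k
    rw [Complex.sin, hζdef, hwdef, ← Complex.exp_nat_mul, ← Complex.exp_nat_mul]
    rw [show (k : ℂ) * (2 * Real.pi * Complex.I / n) = 2 * ((Real.pi : ℂ) * k / n) * Complex.I
        by ring,
      show (k : ℂ) * -((Real.pi : ℂ) * Complex.I / n) = -((Real.pi : ℂ) * k / n) * Complex.I
        by ring]
    have hmul : Complex.exp (2 * ((Real.pi : ℂ) * k / n) * Complex.I) *
        Complex.exp (-((Real.pi : ℂ) * k / n) * Complex.I)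
        = Complex.exp ((Real.pi : ℂ) * k / n * Complex.I) := by
      rw [← Complex.exp_add]; congr 1; ring
    linear_combination (Complex.I / 2) * hmul
  rw [Finset.prod_congr rfl (fun k _ => hfac k), Finset.prod_mul_distrib,
    Finset.prod_mul_distrib, prod_one_sub_zeta n hn, Finset.prod_pow_eq_pow_sum,
    Finset.prod_const, Nat.card_Icc]
  have hsum : ∑ k ∈ Finset.Icc 1 (n - 1), k = ∑ k ∈ Finset.range n, k := by
    have h0 : ∑ k ∈ Finset.range n, k = (fun k => k) 0 + ∑ k ∈ Finset.Ico (0+1) n, k := by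
      rw [Finset.range_eq_Ico]
      exact Finset.sum_eq_sum_Ico_succ_bot (by omega) (fun k => k)
    rw [h0, show Finset.Icc 1 (n-1) = Finset.Ico (0+1) n by ext k; simp; omega]
    simp
  have hS2 : 2 * ∑ k ∈ Finset.Icc 1 (n - 1), k = n * (n - 1) := by
    rw [hsum, mul_comm]
    rw [Finset.sum_range_id_mul_two]
  have hSc : ((∑ k ∈ Finset.Icc 1 (n - 1), k : ℕ) : ℂ) = (n : ℂ) * ((n : ℂ) - 1) / 2 := by
    have h2 : ((2 * ∑ k ∈ Finset.Icc 1 (n - 1), k : ℕ) : ℂ) = ((n * (n - 1) : ℕ) : ℂ) :=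
      congrArg _ hS2
    push_cast [Nat.cast_sub hn] at h2 ⊢
    linear_combination h2 / 2
  have hw : w ^ (∑ k ∈ Finset.Icc 1 (n - 1), k) = (-Complex.I) ^ (n - 1) := by
    rw [hwdef, ← Complex.exp_nat_mul]
    have hcast : ((∑ k ∈ Finset.Icc 1 (n - 1), k : ℕ) : ℂ) * -((Real.pi : ℂ) * Complex.I / n)
        = ((n - 1 : ℕ) : ℂ) * (((-(Real.pi / 2) : ℝ) : ℂ) * Complex.I) := by
      rw [hSc]
      push_cast [Nat.cast_sub hn]
      field_simp
    rw [hcast, Complex.exp_nat_mul]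
    congr 1
    rw [Complex.exp_mul_I, ← Complex.ofReal_cos, ← Complex.ofReal_sin]
    simp
  rw [hw]
  simp only [Nat.add_sub_cancel]
  rw [mul_assoc, ← mul_pow, show (-Complex.I) * (Complex.I / 2) = 1/2 by
    linear_combination (-1/2 : ℂ) * Complex.I_mul_I,
    div_pow, one_pow]
  ring

lemma prod_gamma_sq (n : ℕ) (hn : 1 ≤ n) :
    (∏ k ∈ Finset.Icc 1 (n - 1), Complex.Gamma ((k : ℂ) / n)) ^ 2
      = (2 * (Real.pi : ℂ)) ^ (n - 1) / n := by
  have hn0 : (n : ℂ) ≠ 0 := Nat.cast_ne_zero.2 (by omega)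
  have hrefl : ∏ k ∈ Finset.Icc 1 (n - 1), Complex.Gamma ((k : ℂ) / n)
      = ∏ k ∈ Finset.Icc 1 (n - 1), Complex.Gamma (1 - (k : ℂ) / n) := by
    refine Finset.prod_bij' (fun k _ => n - k) (fun k _ => n - k) ?_ ?_ ?_ ?_ ?_
    · intro a ha; simp only [Finset.mem_Icc] at ha ⊢; omega
    · intro a ha; simp only [Finset.mem_Icc] at ha ⊢; omega
    · intro a ha; simp only [Finset.mem_Icc] at ha; show n - (n - a) = a; omega
    · intro a ha; simp only [Finset.mem_Icc] at ha; show n - (n - a) = a; omega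
    · intro a ha
      simp only [Finset.mem_Icc] at ha
      congr 1
      rw [Nat.cast_sub (by omega : a ≤ n)]
      field_simp
      ring
  calc (∏ k ∈ Finset.Icc 1 (n - 1), Complex.Gamma ((k : ℂ) / n)) ^ 2
      = ∏ k ∈ Finset.Icc 1 (n - 1),
          (Complex.Gamma ((k : ℂ) / n) * Complex.Gamma (1 - (k : ℂ) / n)) := by
        rw [sq, Finset.prod_mul_distrib, ← hrefl]
    _ = ∏ k ∈ Finset.Icc 1 (n - 1), ((Real.pi : ℂ) / Complex.sin ((Real.pi : ℂ) * k / n)) := by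
        refine Finset.prod_congr rfl (fun k _ => ?_)
        rw [Complex.Gamma_mul_Gamma_one_sub, mul_div_assoc]
    _ = (Real.pi : ℂ) ^ (n - 1) / ((n : ℂ) / 2 ^ (n - 1)) := by
        rw [Finset.prod_div_distrib, Finset.prod_const, Nat.card_Icc,
          Nat.add_sub_cancel, prod_sin_icc n hn]
    _ = (2 * (Real.pi : ℂ)) ^ (n - 1) / n := by
        rw [mul_pow]
        rw [div_div_eq_mul_div]
        ring

/-- Proposition 6.4.3, even case. Let `m = 2g + 2 ≥ 4` be even. Then
`(2πi)^(-3g) · ∏_{k ∈ I} Γ(k/m)²·Γ([-2k]/m) = i^(-3g)·4·m^(-2)`, where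
`I = {1, …, m-1} \ {m/2}`. -/
theorem gamma_value_determinant_character_even
    (g : ℕ) (hg : 1 ≤ g) :
    (2 * (Real.pi : ℂ) * Complex.I) ^ (-(3 * (g : ℤ))) *
        ∏ k ∈ (Finset.Icc 1 (2 * g + 1)).erase (g + 1),
          (Complex.Gamma ((k : ℂ) / ((2 * g + 2 : ℕ) : ℂ)) ^ 2 *
            Complex.Gamma ((repZ (2 * g + 2) (-(2 * (k : ℤ))) : ℂ) / ((2 * g + 2 : ℕ) : ℂ)))
      = Complex.I ^ (-(3 * (g : ℤ))) * 4 * ((2 * g + 2 : ℕ) : ℂ) ^ (-(2 : ℤ)) := by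
  have hpi0 : (Real.pi : ℂ) ≠ 0 := Complex.ofReal_ne_zero.2 Real.pi_ne_zero
  have hm0 : ((2 * g + 2 : ℕ) : ℂ) ≠ 0 := Nat.cast_ne_zero.2 (by omega)
  have hg10 : ((g + 1 : ℕ) : ℂ) ≠ 0 := Nat.cast_ne_zero.2 (by omega)
  -- split the product
  rw [Finset.prod_mul_distrib, Finset.prod_pow]
  -- the Gamma-squared part
  set A : ℂ := ∏ k ∈ (Finset.Icc 1 (2 * g + 1)).erase (g + 1),
    Complex.Gamma ((k : ℂ) / ((2 * g + 2 : ℕ) : ℂ)) with hA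
  have hP := Finset.mul_prod_erase (Finset.Icc 1 (2 * g + 1))
    (fun k : ℕ => Complex.Gamma ((k : ℂ) / ((2 * g + 2 : ℕ) : ℂ)))
    (show g + 1 ∈ Finset.Icc 1 (2 * g + 1) from Finset.mem_Icc.2 ⟨by omega, by omega⟩)
  have hhalf : Complex.Gamma (((g + 1 : ℕ) : ℂ) / ((2 * g + 2 : ℕ) : ℂ))
      = Complex.Gamma (1 / 2) := by
    rw [show (((g + 1 : ℕ) : ℂ) / ((2 * g + 2 : ℕ) : ℂ)) = 1 / 2 by
      rw [div_eq_div_iff hm0 two_ne_zero]; push_cast; ring]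
  have hsq : Complex.Gamma (1 / 2) ^ 2 = (Real.pi : ℂ) := by
    have h := Complex.Gamma_mul_Gamma_one_sub (1 / 2)
    rw [show (1 : ℂ) - 1 / 2 = 1 / 2 by norm_num,
      show (Real.pi : ℂ) * (1 / 2) = (Real.pi : ℂ) / 2 by ring,
      Complex.sin_pi_div_two, div_one] at h
    rw [sq, h]
  have hPsq : (∏ k ∈ Finset.Icc 1 (2 * g + 1),
      Complex.Gamma ((k : ℂ) / ((2 * g + 2 : ℕ) : ℂ))) ^ 2
      = (2 * (Real.pi : ℂ)) ^ (2 * g + 1) / ((2 * g + 2 : ℕ) : ℂ) := by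
    exact prod_gamma_sq (2 * g + 2) (by omega)
  have hAsq : A ^ 2 = (2 * (Real.pi : ℂ)) ^ (2 * g + 1) / ((2 * g + 2 : ℕ) : ℂ)
      / (Real.pi : ℂ) := by
    have h1 : (Real.pi : ℂ) * A ^ 2
        = (2 * (Real.pi : ℂ)) ^ (2 * g + 1) / ((2 * g + 2 : ℕ) : ℂ) := by
      rw [← hPsq, ← hP, hhalf, mul_pow, hsq]
    rw [eq_div_iff hm0] at h1
    rw [div_div, eq_div_iff (mul_ne_zero hm0 hpi0)]
    linear_combination h1
  -- the repZ part
  have hI : (Finset.Icc 1 (2 * g + 1)).erase (g + 1)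
      = Finset.Icc 1 g ∪ Finset.Icc (g + 2) (2 * g + 1) := by
    ext k; simp only [Finset.mem_erase, Finset.mem_Icc, Finset.mem_union]; omega
  have hdisj : Disjoint (Finset.Icc 1 g) (Finset.Icc (g + 2) (2 * g + 1)) := by
    rw [Finset.disjoint_left]
    intro a ha hb
    simp only [Finset.mem_Icc] at ha hb
    omega
  have hrep1 : ∀ k ∈ Finset.Icc 1 g,
      repZ (2 * g + 2) (-(2 * (k : ℤ))) = 2 * (g + 1 - k) := by
    intro k hk
    simp only [Finset.mem_Icc] at hk
    unfold repZ
    have h1 : (-(2 * (k : ℤ))) % ((2 * g + 2 : ℕ) : ℤ) = 2 * ((g : ℤ) + 1 - k) := by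
      rw [show -(2 * (k : ℤ)) = (2 * ((g : ℤ) + 1 - k)) + ((2 * g + 2 : ℕ) : ℤ) * (-1) by
        push_cast; ring, Int.add_mul_emod_self_left, Int.emod_eq_of_lt (by push_cast; omega)
        (by push_cast; omega)]
    rw [h1]
    omega
  have hrep2 : ∀ k ∈ Finset.Icc (g + 2) (2 * g + 1),
      repZ (2 * g + 2) (-(2 * (k : ℤ))) = 2 * (2 * g + 2 - k) := by
    intro k hk
    simp only [Finset.mem_Icc] at hk
    unfold repZ
    have h1 : (-(2 * (k : ℤ))) % ((2 * g + 2 : ℕ) : ℤ) = 2 * (2 * (g : ℤ) + 2 - k) := by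
      rw [show -(2 * (k : ℤ)) = (2 * (2 * (g : ℤ) + 2 - k)) + ((2 * g + 2 : ℕ) : ℤ) * (-2) by
        push_cast; ring, Int.add_mul_emod_self_left, Int.emod_eq_of_lt (by push_cast; omega)
        (by push_cast; omega)]
    rw [h1]
    omega
  have hdiv : ∀ j : ℕ, ((2 * j : ℕ) : ℂ) / ((2 * g + 2 : ℕ) : ℂ)
      = ((j : ℕ) : ℂ) / ((g + 1 : ℕ) : ℂ) := by
    intro j
    rw [div_eq_div_iff hm0 hg10]
    push_cast; ring
  have hB : (∏ k ∈ (Finset.Icc 1 (2 * g + 1)).erase (g + 1),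
      Complex.Gamma ((repZ (2 * g + 2) (-(2 * (k : ℤ))) : ℂ) / ((2 * g + 2 : ℕ) : ℂ)))
      = (∏ j ∈ Finset.Icc 1 g, Complex.Gamma ((j : ℂ) / ((g + 1 : ℕ) : ℂ))) ^ 2 := by
    rw [hI, Finset.prod_union hdisj, sq]
    congr 1
    · rw [Finset.prod_congr rfl (fun k hk => by rw [hrep1 k hk, hdiv])]
      refine Finset.prod_bij' (fun k _ => g + 1 - k) (fun k _ => g + 1 - k) ?_ ?_ ?_ ?_ ?_
      · intro a ha; simp only [Finset.mem_Icc] at ha ⊢; omega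
      · intro a ha; simp only [Finset.mem_Icc] at ha ⊢; omega
      · intro a ha; simp only [Finset.mem_Icc] at ha; show g + 1 - (g + 1 - a) = a; omega
      · intro a ha; simp only [Finset.mem_Icc] at ha; show g + 1 - (g + 1 - a) = a; omega
      · intro a ha; rfl
    · rw [Finset.prod_congr rfl (fun k hk => by rw [hrep2 k hk, hdiv])]
      refine Finset.prod_bij' (fun k _ => 2 * g + 2 - k) (fun k _ => 2 * g + 2 - k) ?_ ?_ ?_ ?_ ?_
      · intro a ha; simp only [Finset.mem_Icc] at ha ⊢; omega
      · intro a ha; simp only [Finset.mem_Icc] at ha ⊢; omega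
      · intro a ha; simp only [Finset.mem_Icc] at ha; show 2 * g + 2 - (2 * g + 2 - a) = a; omega
      · intro a ha; simp only [Finset.mem_Icc] at ha; show 2 * g + 2 - (2 * g + 2 - a) = a; omega
      · intro a ha; rfl
  have hQsq : (∏ j ∈ Finset.Icc 1 g, Complex.Gamma ((j : ℂ) / ((g + 1 : ℕ) : ℂ))) ^ 2
      = (2 * (Real.pi : ℂ)) ^ g / ((g + 1 : ℕ) : ℂ) := by
    exact prod_gamma_sq (g + 1) (by omega)
  rw [hB, hQsq, hAsq]
  -- final arithmetic
  have hexp : -(3 * (g : ℤ)) = -((3 * g : ℕ) : ℤ) := by push_cast; ring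
  rw [hexp, zpow_neg, zpow_natCast, zpow_neg, zpow_natCast,
    show (2 : ℤ) = ((2 : ℕ) : ℤ) from rfl, zpow_neg, zpow_natCast]
  have hpow : (2 * (Real.pi : ℂ) * Complex.I) ^ (3 * g)
      = ((2 * (Real.pi : ℂ)) ^ g) ^ 3 * Complex.I ^ (3 * g) := by
    rw [mul_pow, show 3 * g = g * 3 from mul_comm 3 g, pow_mul]
  have h2g1 : (2 * (Real.pi : ℂ)) ^ (2 * g + 1)
      = ((2 * (Real.pi : ℂ)) ^ g) ^ 2 * (2 * (Real.pi : ℂ)) := by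
    rw [pow_succ]
    congr 1
    rw [show 2 * g = g * 2 from mul_comm 2 g, pow_mul]
  have ha0 : ((2 * (Real.pi : ℂ)) ^ g) ≠ 0 := pow_ne_zero _ (by simp [hpi0])
  have hI0 : Complex.I ^ (3 * g) ≠ 0 := pow_ne_zero _ Complex.I_ne_zero
  rw [hpow, h2g1]
  have hcast : ((2 * g + 2 : ℕ) : ℂ) = 2 * (((g + 1 : ℕ) : ℂ)) := by push_cast; ring
  rw [hcast]
  set a : ℂ := (2 * (Real.pi : ℂ)) ^ g with hadef
  set c : ℂ := ((g + 1 : ℕ) : ℂ) with hcdef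
  have key : a ^ 2 * (2 * (Real.pi : ℂ)) / (2 * c) / (Real.pi : ℂ) * (a / c)
      = a ^ 3 * (4 * ((2 * c) ^ 2)⁻¹) := by
    field_simp
    ring
  rw [mul_inv, key]
  have h2c : (2 * c) ^ 2 ≠ 0 := pow_ne_zero _ (mul_ne_zero two_ne_zero hg10)
  field_simp
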